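/- Let g : ℝ^d → ℝ be differentiable with L-Lipschitz gradient (L-smooth), and let C > 0, C̃ > 0, γ_t > 0. On a probability space let x_t be a random vector in ℝ^d and δ_t a random vector independent of x_t satisfying E[δ_t] = 0, E[‖δ_t‖₂²] ≤ γ_t² C, and E[|⟨δ_t, v⟩|] ≥ C̃ γ_t ‖v‖₂ for every fixed v ∈ ℝ^d. Define x_{t+1} = x_t + δ_t if g(x_t + δ_t) < g(x_t) and x_{t+1} = x_t otherwise, and assume g(x_t), g(x_{t+1}), ‖∇g(x_t)‖₂ and ‖δ_t‖₂² are integrable. Then E[g(x_{t+1})] ≤ E[g(x_t)] − (C̃ γ_t / 2) · E[‖∇g(x_t)‖₂] + L C γ_t² / 2. -/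

import Mathlib

open MeasureTheory ProbabilityTheory
open scoped RealInnerProductSpace


lemma descent_lemma {E : Type*} [NormedAddCommGroup E] [InnerProductSpace ℝ E] [CompleteSpace E]
    {L : ℝ} {g : E → ℝ} (hg : Differentiable ℝ g)
    (hlip : ∀ a b : E, ‖gradient g a - gradient g b‖ ≤ L * ‖a - b‖) (a v : E) :
    g (a + v) ≤ g a + ⟪gradient g a, v⟫ + L / 2 * ‖v‖ ^ 2 := by
  set φ : ℝ → ℝ := fun t => g (a + t • v) - t * ⟪gradient g a, v⟫ - L / 2 * ‖v‖ ^ 2 * t ^ 2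
    with hφ
  have hderiv : ∀ t : ℝ, HasDerivAt φ
      (⟪gradient g (a + t • v), v⟫ - ⟪gradient g a, v⟫ - L * ‖v‖ ^ 2 * t) t := by
    intro t
    have hc : HasDerivAt (fun t : ℝ => a + t • v) v t := by
      simpa using ((hasDerivAt_id t).smul_const v).const_add a
    have h1 : HasDerivAt (fun t : ℝ => g (a + t • v)) ⟪gradient g (a + t • v), v⟫ t := by
      have := ((hg (a + t • v)).hasGradientAt.hasFDerivAt).comp_hasDerivAt t hc
      simp [InnerProductSpace.toDual_apply_apply] at this ⊢
      exact this
    have h2 : HasDerivAt (fun t : ℝ => t * ⟪gradient g a, v⟫) ⟪gradient g a, v⟫ t := by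
      simpa using (hasDerivAt_id t).mul_const ⟪gradient g a, v⟫
    have h3 : HasDerivAt (fun t : ℝ => L / 2 * ‖v‖ ^ 2 * t ^ 2) (L * ‖v‖ ^ 2 * t) t := by
      have := (hasDerivAt_pow 2 t).const_mul (L / 2 * ‖v‖ ^ 2)
      refine this.congr_deriv ?_
      norm_num
      ring
    exact (h1.sub h2).sub h3
  have hanti : AntitoneOn φ (Set.Icc (0:ℝ) 1) := by
    apply antitoneOn_of_deriv_nonpos (convex_Icc 0 1)
    · exact (fun t _ => (hderiv t).differentiableAt.continuousAt.continuousWithinAt)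
    · exact fun t _ => (hderiv t).differentiableAt.differentiableWithinAt
    · intro t ht
      rw [interior_Icc] at ht
      rw [(hderiv t).deriv]
      have key : ⟪gradient g (a + t • v) - gradient g a, v⟫
          ≤ L * ‖v‖ ^ 2 * t := by
        calc ⟪gradient g (a + t • v) - gradient g a, v⟫
            ≤ ‖gradient g (a + t • v) - gradient g a‖ * ‖v‖ := real_inner_le_norm _ _
          _ ≤ (L * ‖a + t • v - a‖) * ‖v‖ := by
              apply mul_le_mul_of_nonneg_right (hlip _ _) (norm_nonneg _)
          _ = L * ‖v‖ ^ 2 * t := by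
              have : ‖a + t • v - a‖ = t * ‖v‖ := by
                rw [add_sub_cancel_left, norm_smul, Real.norm_eq_abs,
                  abs_of_pos ht.1]
              rw [this]; ring
      rw [inner_sub_left] at key
      linarith
  have h10 : φ 1 ≤ φ 0 :=
    hanti (Set.left_mem_Icc.2 zero_le_one) (Set.right_mem_Icc.2 zero_le_one) zero_le_one
  simp only [hφ, one_smul, zero_smul, add_zero, one_mul, one_pow, mul_one, zero_mul,
    mul_zero, sub_zero, zero_pow] at h10
  linarith [h10]

/-- The one-step expected decrease inequality from the proof of Proposition 2: for an `L`-smooth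
`g`, a random iterate `x` and an independent random update `δ` with zero mean, second moment
bounded by `γ² C` and `E|⟨δ, v⟩| ≥ C̃ γ ‖v‖` for every fixed direction `v`, the accepted-only-if-
improving step `x' = x + δ` if `g(x+δ) < g(x)` else `x` satisfies
`E[g(x')] ≤ E[g(x)] − (C̃ γ / 2) E‖∇g(x)‖ + L C γ² / 2`. -/
theorem random_search_one_step_decrease
    (d : ℕ) (L C Ct γ : ℝ) (hL : 0 ≤ L) (hC : 0 < C) (hCt : 0 < Ct) (hγ : 0 < γ)
    (g : EuclideanSpace ℝ (Fin d) → ℝ)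
    (hg : Differentiable ℝ g)
    (hlip : ∀ a b : EuclideanSpace ℝ (Fin d),
      ‖gradient g a - gradient g b‖ ≤ L * ‖a - b‖)
    {Ω : Type*} [MeasurableSpace Ω] (μ : Measure Ω) [IsProbabilityMeasure μ]
    (x δ : Ω → EuclideanSpace ℝ (Fin d))
    (hxmeas : Measurable x) (hδmeas : Measurable δ)
    (hindep : IndepFun x δ μ)
    (hmean : ∫ ω, δ ω ∂μ = 0)
    (hvar : ∫ ω, ‖δ ω‖ ^ 2 ∂μ ≤ γ ^ 2 * C)
    (hip : ∀ v : EuclideanSpace ℝ (Fin d),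
      ∫ ω, |⟪δ ω, v⟫| ∂μ ≥ Ct * γ * ‖v‖)
    (x' : Ω → EuclideanSpace ℝ (Fin d))
    (hx' : ∀ ω, x' ω = if g (x ω + δ ω) < g (x ω) then x ω + δ ω else x ω)
    (hint_gx : Integrable (fun ω => g (x ω)) μ)
    (hint_gx' : Integrable (fun ω => g (x' ω)) μ)
    (hint_grad : Integrable (fun ω => ‖gradient g (x ω)‖) μ)
    (hint_δ : Integrable (fun ω => ‖δ ω‖ ^ 2) μ) :
    ∫ ω, g (x' ω) ∂μ ≤
      ∫ ω, g (x ω) ∂μ - (Ct * γ / 2) * ∫ ω, ‖gradient g (x ω)‖ ∂μ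
        + L * C * γ ^ 2 / 2 := by
  -- the gradient is Lipschitz, hence continuous
  have hgradcont : Continuous (gradient g) := by
    have : LipschitzWith (Real.toNNReal L) (gradient g) := by
      apply LipschitzWith.of_dist_le_mul
      intro a b
      rw [dist_eq_norm, dist_eq_norm]
      exact (hlip a b).trans
        (mul_le_mul_of_nonneg_right (Real.le_coe_toNNReal L) (norm_nonneg _))
    exact this.continuous
  have hpair : Measurable (fun ω => (x ω, δ ω)) := hxmeas.prodMk hδmeas
  have hmap : μ.map (fun ω => (x ω, δ ω)) = (μ.map x).prod (μ.map δ) :=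
    (indepFun_iff_map_prod_eq_prod_map_map hxmeas.aemeasurable hδmeas.aemeasurable).1 hindep
  haveI : IsProbabilityMeasure (μ.map x) := Measure.isProbabilityMeasure_map hxmeas.aemeasurable
  haveI : IsProbabilityMeasure (μ.map δ) := Measure.isProbabilityMeasure_map hδmeas.aemeasurable
  -- integrability facts
  have hδ1 : Integrable (fun ω => ‖δ ω‖) μ := by
    apply Integrable.mono' ((integrable_const (1:ℝ)).add hint_δ)
      hδmeas.norm.aestronglyMeasurable
    filter_upwards with ω
    simp only [Pi.add_apply]
    rw [Real.norm_eq_abs, abs_of_nonneg (norm_nonneg _)]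
    nlinarith [norm_nonneg (δ ω), sq_nonneg (‖δ ω‖ - 1)]
  have hfν : Integrable (fun a => ‖gradient g a‖) (μ.map x) :=
    (integrable_map_measure hgradcont.norm.aestronglyMeasurable hxmeas.aemeasurable).2 hint_grad
  have hhπ : Integrable (fun b : EuclideanSpace ℝ (Fin d) => ‖b‖) (μ.map δ) :=
    (integrable_map_measure continuous_norm.aestronglyMeasurable hδmeas.aemeasurable).2 hδ1
  have hidπ : Integrable (fun b : EuclideanSpace ℝ (Fin d) => b) (μ.map δ) :=
    (integrable_map_measure continuous_id.aestronglyMeasurable hδmeas.aemeasurable).2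
      ((integrable_norm_iff hδmeas.aestronglyMeasurable).1 hδ1)
  -- the bilinear integrand
  set T : EuclideanSpace ℝ (Fin d) × EuclideanSpace ℝ (Fin d) → ℝ :=
    fun p => ⟪gradient g p.1, p.2⟫ with hT
  have hTcont : Continuous T := (hgradcont.comp continuous_fst).inner continuous_snd
  have hTint : Integrable T ((μ.map x).prod (μ.map δ)) := by
    apply Integrable.mono' (hfν.mul_prod hhπ) hTcont.aestronglyMeasurable
    filter_upwards with p
    exact (abs_real_inner_le_norm _ _)
  have hTμ : Integrable (fun ω => T (x ω, δ ω)) μ :=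
    (integrable_map_measure hTcont.aestronglyMeasurable hpair.aemeasurable).1
      (hmap ▸ hTint)
  have hTμabs : Integrable (fun ω => |T (x ω, δ ω)|) μ := hTμ.abs
  -- expectation of the inner product term is zero
  have hA : ∫ ω, T (x ω, δ ω) ∂μ = 0 := by
    have e1 : ∫ ω, T (x ω, δ ω) ∂μ = ∫ p, T p ∂((μ.map x).prod (μ.map δ)) := by
      rw [← hmap, integral_map hpair.aemeasurable hTcont.aestronglyMeasurable]
    rw [e1, integral_prod T hTint]
    have e2 : ∀ a : EuclideanSpace ℝ (Fin d),
        ∫ b, T (a, b) ∂(μ.map δ) = 0 := by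
      intro a
      have : ∫ b, (⟪gradient g a, b⟫ : ℝ) ∂(μ.map δ)
          = ⟪gradient g a, ∫ b, b ∂(μ.map δ)⟫ := integral_inner hidπ _
      have e4 : ∫ b : EuclideanSpace ℝ (Fin d), b ∂(μ.map δ) = ∫ ω, δ ω ∂μ :=
        integral_map hδmeas.aemeasurable aestronglyMeasurable_id
      rw [hT]
      simp only at this ⊢
      rw [this, e4, hmean, inner_zero_right]
    simp only [e2, integral_zero]
  -- lower bound for the expectation of |inner product|
  have hB : Ct * γ * ∫ ω, ‖gradient g (x ω)‖ ∂μ ≤ ∫ ω, |T (x ω, δ ω)| ∂μ := by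
    have e1 : ∫ ω, |T (x ω, δ ω)| ∂μ = ∫ p, |T p| ∂((μ.map x).prod (μ.map δ)) := by
      rw [← hmap, integral_map hpair.aemeasurable hTcont.abs.aestronglyMeasurable]
    have e3 : ∫ ω, ‖gradient g (x ω)‖ ∂μ = ∫ a, ‖gradient g a‖ ∂(μ.map x) := by
      rw [integral_map hxmeas.aemeasurable hgradcont.norm.aestronglyMeasurable]
    rw [e1, e3, integral_prod _ hTint.abs]
    rw [← integral_const_mul]
    apply integral_mono (hfν.const_mul _) hTint.abs.integral_prod_left
    intro a
    have : ∫ b, |T (a, b)| ∂(μ.map δ) = ∫ ω, |⟪δ ω, gradient g a⟫| ∂μ := by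
      rw [hT]
      simp only
      rw [integral_map hδmeas.aemeasurable]
      · simp_rw [real_inner_comm]
      · exact (Continuous.abs (continuous_const.inner continuous_id)).aestronglyMeasurable
    simp only
    rw [this]
    exact hip (gradient g a)
  -- pointwise inequality
  have hpt : ∀ ω, g (x' ω) ≤ g (x ω) + (T (x ω, δ ω) - |T (x ω, δ ω)|) / 2
      + L / 2 * ‖δ ω‖ ^ 2 := by
    intro ω
    have hdesc := descent_lemma hg hlip (x ω) (δ ω)
    have hLn : 0 ≤ L / 2 * ‖δ ω‖ ^ 2 := by positivity
    rw [hx' ω]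
    split_ifs with h
    · rcases le_or_gt 0 (T (x ω, δ ω)) with h0 | h0
      · rw [abs_of_nonneg h0]; simp only [hT] at *; linarith
      · rw [abs_of_neg h0]; simp only [hT] at *; linarith
    · push_neg at h
      rcases le_or_gt 0 (T (x ω, δ ω)) with h0 | h0
      · rw [abs_of_nonneg h0]; simp only [hT] at *; linarith
      · rw [abs_of_neg h0]; simp only [hT] at *; linarith
  -- integrate
  have H2 : Integrable (fun ω => (T (x ω, δ ω) - |T (x ω, δ ω)|) / 2) μ :=
    (hTμ.sub hTμabs).div_const 2
  have H3 : Integrable (fun ω => L / 2 * ‖δ ω‖ ^ 2) μ := hint_δ.const_mul (L / 2)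
  have H12 : Integrable (fun ω => g (x ω) + (T (x ω, δ ω) - |T (x ω, δ ω)|) / 2) μ :=
    hint_gx.add H2
  have H : Integrable (fun ω => g (x ω) + (T (x ω, δ ω) - |T (x ω, δ ω)|) / 2
      + L / 2 * ‖δ ω‖ ^ 2) μ := H12.add H3
  have hmono := integral_mono hint_gx' H hpt
  rw [integral_add H12 H3, integral_add hint_gx H2, integral_div,
    integral_sub hTμ hTμabs, integral_const_mul, hA] at hmono
  have hfinal : L / 2 * ∫ ω, ‖δ ω‖ ^ 2 ∂μ ≤ L / 2 * (γ ^ 2 * C) :=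
    mul_le_mul_of_nonneg_left hvar (by linarith)
  have hB' : (Ct * γ / 2) * ∫ ω, ‖gradient g (x ω)‖ ∂μ
      ≤ (∫ ω, |T (x ω, δ ω)| ∂μ) / 2 := by linarith
  linarith
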